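/- Proper time of a deterministic system is running time: Let ν be a stochastic dynamical system on a countable type S that is deterministic, i.e., there is a function f : S → S with ν(s, f s) = 1 for every s ∈ S. Then for all states u, v ∈ S, the proper time satisfies τ_ν(u→v) = sInf { (n + 1 : ℝ) : n ∈ ℕ, f^[n] u = v } (taken in [0,∞], equal to ∞ if v is not in the forward orbit of u); that is, τ_ν(u→v) equals the length of the shortest deterministic run from u to v, counted in states. -/

import Mathlib

open scoped ENNReal NNReal
/-- The probability of a trajectory `h = (s₁, …, sₙ)` under the transition kernel `ν`:
the product of the transition probabilities along adjacent pairs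
(so a length-1 trajectory has probability 1). -/
def trajProb {S : Type*} (ν : S → S → NNReal) (h : List S) : NNReal :=
  ((h.zip h.tail).map fun p => ν p.1 p.2).prod

/-- The proper time `τ_ν(u → v)`: the infimum, over all trajectories `h` from `u` to `v`
with positive probability, of `T(h) / ν(h)`, taken in `[0, ∞]`
(so it is `∞` if no such trajectory exists). -/
noncomputable def properTime {S : Type*} (ν : S → S → NNReal) (u v : S) : ℝ≥0∞ :=
  ⨅ h ∈ {h : List S | h.head? = some u ∧ h.getLast? = some v ∧ 0 < trajProb ν h},
    (h.length : ℝ≥0∞) / (trajProb ν h : ℝ≥0∞)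

lemma trajProb_cons_cons {S : Type*} (ν : S → S → NNReal) (a b : S) (t : List S) :
    trajProb ν (a :: b :: t) = ν a b * trajProb ν (b :: t) := by
  simp [trajProb]

lemma det_step {S : Type*} (ν : S → S → NNReal)
    (hν : ∀ s : S, ∑' t : S, ν s t = 1) (f : S → S) (hf : ∀ s : S, ν s (f s) = 1)
    {s t : S} (hpos : 0 < ν s t) : t = f s ∧ ν s t = 1 := by
  classical
  have hsum : Summable (ν s) := by
    by_contra h
    have := hν s
    rw [tsum_eq_zero_of_not_summable h] at this
    exact one_ne_zero this.symm
  have hts : t = f s := by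
    by_contra hne
    have hle := Summable.sum_le_tsum ({f s, t} : Finset S) (fun i _ => zero_le) hsum
    rw [Finset.sum_pair (fun h => hne h.symm), hν s, hf s] at hle
    have h0 : ν s t ≤ 0 := by
      simpa using (add_le_iff_nonpos_right _).mp hle
    exact absurd (le_antisymm h0 zero_le) hpos.ne'
  subst hts
  exact ⟨rfl, hf s⟩

lemma det_run {S : Type*} (ν : S → S → NNReal)
    (hν : ∀ s : S, ∑' t : S, ν s t = 1) (f : S → S) (hf : ∀ s : S, ν s (f s) = 1) :
    ∀ (h : List S) (u v : S), h.head? = some u → h.getLast? = some v →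
      0 < trajProb ν h → trajProb ν h = 1 ∧ f^[h.length - 1] u = v := by
  intro h
  induction h with
  | nil => intro u v hh _ _; simp at hh
  | cons a t ih =>
    intro u v hh hl hp
    have hau : a = u := by simpa using hh
    subst hau
    cases t with
    | nil =>
      have : a = v := by simpa using hl
      subst this
      simp [trajProb]
    | cons b t' =>
      rw [trajProb_cons_cons] at hp
      have hboth := mul_ne_zero_iff.mp hp.ne'
      have h1 : 0 < ν a b := pos_iff_ne_zero.mpr hboth.1
      have h2 : 0 < trajProb ν (b :: t') := pos_iff_ne_zero.mpr hboth.2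
      obtain ⟨hbf, hν1⟩ := det_step ν hν f hf h1
      have hl' : (b :: t').getLast? = some v := by
        rw [List.getLast?_cons_cons] at hl; exact hl
      obtain ⟨hp1, hit⟩ := ih b v rfl hl' h2
      constructor
      · rw [trajProb_cons_cons, hν1, hp1, one_mul]
      · have : (a :: b :: t').length - 1 = t'.length + 1 := by simp
        rw [this, Function.iterate_succ_apply, ← hbf]
        simpa using hit

lemma trajProb_iterate {S : Type*} (ν : S → S → NNReal)
    (f : S → S) (hf : ∀ s : S, ν s (f s) = 1) :
    ∀ (n : ℕ) (a : S), trajProb ν (List.iterate f a n) = 1 := by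
  intro n
  induction n with
  | zero => intro a; simp [trajProb]
  | succ n ih =>
    intro a
    cases n with
    | zero => simp [trajProb, List.iterate]
    | succ m =>
      rw [List.iterate, List.iterate, trajProb_cons_cons, hf a, one_mul,
        ← List.iterate]
      exact ih (f a)

lemma getLast?_iterate {S : Type*} (f : S → S) :
    ∀ (n : ℕ) (a : S), (List.iterate f a (n + 1)).getLast? = some (f^[n] a) := by
  intro n
  induction n with
  | zero => intro a; simp [List.iterate]
  | succ m ih =>
    intro a
    rw [List.iterate, List.iterate, List.getLast?_cons_cons, ← List.iterate, ih (f a),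
      Function.iterate_succ_apply]

/-- **Proper time of a deterministic system is its running time.** If `ν` is deterministic,
i.e. there is `f : S → S` with `ν s (f s) = 1` for every `s`, then `τ_ν(u→v)` equals the
length (in states) of the shortest deterministic run from `u` to `v`:
`τ_ν(u→v) = sInf { n + 1 : n ∈ ℕ, f^[n] u = v }`, taken in `[0,∞]`
(equal to `∞` if `v` is not in the forward orbit of `u`). -/
theorem properTime_deterministic {S : Type*} [Countable S]
    (ν : S → S → NNReal) (hν : ∀ s : S, ∑' t : S, ν s t = 1)
    (f : S → S) (hf : ∀ s : S, ν s (f s) = 1) (u v : S) :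
    properTime ν u v = sInf {r : ℝ≥0∞ | ∃ n : ℕ, f^[n] u = v ∧ r = ((n : ℝ≥0∞) + 1)} := by
  apply le_antisymm
  · apply le_sInf
    rintro r ⟨n, hn, rfl⟩
    have hmem : (List.iterate f u (n + 1)) ∈
        {h : List S | h.head? = some u ∧ h.getLast? = some v ∧ 0 < trajProb ν h} := by
      refine ⟨by simp [List.iterate], ?_, ?_⟩
      · rw [getLast?_iterate, hn]
      · rw [trajProb_iterate ν f hf]; exact one_pos
    calc properTime ν u v ≤ ((List.iterate f u (n + 1)).length : ℝ≥0∞) /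
          (trajProb ν (List.iterate f u (n + 1)) : ℝ≥0∞) := biInf_le _ hmem
      _ = (n : ℝ≥0∞) + 1 := by
          rw [trajProb_iterate ν f hf]
          simp [List.length_iterate]
  · apply le_iInf₂
    intro h hh
    obtain ⟨hhu, hhv, hhp⟩ := hh
    obtain ⟨hp1, hit⟩ := det_run ν hν f hf h u v hhu hhv hhp
    apply sInf_le
    refine ⟨h.length - 1, hit, ?_⟩
    have hlen : 0 < h.length := by
      cases h with
      | nil => simp at hhu
      | cons a t => simp
    have hcast : ((h.length - 1 : ℕ) : ℝ≥0∞) + 1 = (h.length : ℝ≥0∞) := by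
      norm_cast
      omega
    rw [hp1, ← hcast]
    simp
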